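/- Let m ≥ 3 and fix a point x of an m-dimensional Lorentzian spin manifold. The principal symbol σ_Q(ξ) of the Rarita–Schwinger operator, given by σ_Q(ξ)ψ = i[(id ⊗ ξ^♯·)ψ - (2/m) Σ_β e_β* ⊗ e_β·(ξ^♯ ⌟ ψ)] on Σ^{3/2}_x M = ker(γ) ⊂ T*_x M ⊗ Σ_x M, is invertible if and only if ξ is not lightlike. That is, the characteristic variety of the Rarita–Schwinger operator is exactly the set of nonzero lightlike covectors. -/

import Mathlib

section Aux
variable {m : ℕ} {S : Type*} [AddCommGroup S] [Module ℂ S]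

lemma aux_single_sum (ε : Fin m → ℝ) (j : Fin m) (y : Fin m → ℝ) :
    (∑ k, ε k * (Pi.single j 1 : Fin m → ℝ) k * y k) = ε j * y j := by
  rw [Finset.sum_eq_single j]
  · simp
  · intro k _ hk; simp [Pi.single_apply, hk]
  · simp

lemma aux_single_sum' (ε : Fin m → ℝ) (j : Fin m) (y : Fin m → ℝ) :
    (∑ k, ε k * y k * (Pi.single j 1 : Fin m → ℝ) k) = ε j * y j := by
  rw [Finset.sum_eq_single j]
  · simp
  · intro k _ hk; simp [Pi.single_apply, hk]
  · simp

lemma aux_expand (c : (Fin m → ℝ) →ₗ[ℝ] (S →ₗ[ℂ] S)) (x : Fin m → ℝ) (φ : S) :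
    c x φ = ∑ j, ((x j : ℝ) : ℂ) • c (Pi.single j 1) φ := by
  have hx : x = ∑ j, x j • (Pi.single j 1 : Fin m → ℝ) := by
    funext k
    simp [Finset.sum_apply, Pi.single_apply, mul_ite, Finset.sum_ite_eq]
  conv_lhs => rw [hx]
  rw [map_sum, LinearMap.sum_apply]
  refine Finset.sum_congr rfl fun j _ => ?_
  rw [map_smul, LinearMap.smul_apply, Complex.coe_smul]

lemma aux_half (r : ℂ) (a φ : S) (h : a + a = r • φ) : a = (r / 2) • φ := by
  have h2 : (2 : ℂ) • a = r • φ := by rw [two_smul]; exact h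
  have h3 := congrArg (fun v => (2 : ℂ)⁻¹ • v) h2
  simpa [smul_smul, div_eq_inv_mul] using h3

end Aux

set_option maxHeartbeats 2000000 in
theorem stmt_17 {m : ℕ} (hm : 3 ≤ m)
    (ε : Fin m → ℝ) (hε0 : ε ⟨0, by omega⟩ = -1) (hε : ∀ j : Fin m, j ≠ ⟨0, by omega⟩ → ε j = 1)
    {S : Type*} [AddCommGroup S] [Module ℂ S]
    (c : (Fin m → ℝ) →ₗ[ℝ] (S →ₗ[ℂ] S))
    (hcl : ∀ (X Y : Fin m → ℝ) (φ : S),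
      c X (c Y φ) + c Y (c X φ) = ((-2 * ∑ j, ε j * X j * Y j : ℝ) : ℂ) • φ)
    (hnil : ∀ X : Fin m → ℝ, X ≠ 0 → (∑ j, ε j * X j * X j) = 0 →
      ∃ φ : S, φ ≠ 0 ∧ c X φ = 0) :
    ∀ x : Fin m → ℝ,
      let K : Set (Fin m → S) :=
        {ψ | ∑ j, ((ε j : ℝ) : ℂ) • c (Pi.single j 1) (ψ j) = 0}
      let σQ : (Fin m → S) → (Fin m → S) := fun ψ β =>
        Complex.I • (c x (ψ β) -
          ((2 : ℂ) / (m : ℂ)) • c (Pi.single β 1) (∑ α, ((x α : ℝ) : ℂ) • ψ α))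
      Set.MapsTo σQ K K ∧
      (x ≠ 0 → (Set.BijOn σQ K K ↔ (∑ j, ε j * x j * x j) ≠ 0)) := by
  intro x
  dsimp only
  set q : ℝ := ∑ j, ε j * x j * x j with hqdef
  have hm0 : (m : ℂ) ≠ 0 := Nat.cast_ne_zero.mpr (by omega)
  have hm2 : (m : ℂ) - 2 ≠ 0 := by
    intro h
    have : (m : ℂ) = ((2 : ℕ) : ℂ) := by push_cast; linear_combination h
    have : m = 2 := Nat.cast_injective this
    omega
  have hee : ∀ j : Fin m, ε j * ε j = 1 := by
    intro j
    by_cases h : j = ⟨0, by omega⟩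
    · subst h; rw [hε0]; norm_num
    · rw [hε j h]; norm_num
  have heeC : ∀ j : Fin m, ((ε j : ℝ) : ℂ) * ((ε j : ℝ) : ℂ) = 1 := by
    intro j; exact_mod_cast congrArg (fun r : ℝ => (r : ℂ)) (hee j)
  -- Clifford composition facts
  have hcee : ∀ (j : Fin m) (φ : S),
      c (Pi.single j 1) (c (Pi.single j 1) φ) = (-((ε j : ℝ) : ℂ)) • φ := by
    intro j φ
    have h := aux_half _ _ _ (hcl (Pi.single j 1) (Pi.single j 1) φ)
    rw [aux_single_sum ε j] at h
    rw [h]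
    congr 1
    have := Pi.single_eq_same (M := fun _ : Fin m => ℝ) j 1
    rw [this]
    push_cast
    ring
  have hcxx : ∀ φ : S, c x (c x φ) = (-(q : ℂ)) • φ := by
    intro φ
    have h := aux_half _ _ _ (hcl x x φ)
    rw [h]
    congr 1
    rw [← hqdef]
    push_cast
    ring
  have hcex : ∀ (j : Fin m) (φ : S),
      c (Pi.single j 1) (c x φ)
        = ((-2 * (ε j * x j) : ℝ) : ℂ) • φ - c x (c (Pi.single j 1) φ) := by
    intro j φ
    have h := hcl (Pi.single j 1) x φ
    rw [aux_single_sum ε j] at h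
    exact eq_sub_of_add_eq h
  have hcxe : ∀ (j : Fin m) (φ : S),
      c x (c (Pi.single j 1) φ)
        = ((-2 * (ε j * x j) : ℝ) : ℂ) • φ - c (Pi.single j 1) (c x φ) := by
    intro j φ
    have h := hcl (Pi.single j 1) x φ
    rw [aux_single_sum ε j] at h
    exact eq_sub_of_add_eq (by rw [add_comm]; exact h)
  -- the key gamma computation
  have hKsum : ∀ ψ : Fin m → S,
      (∑ j, ((ε j : ℝ) : ℂ) • c (Pi.single j 1) (ψ j)) = 0 →
      ∑ j, ((ε j : ℝ) : ℂ) • c (Pi.single j 1) (c x (ψ j))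
        = (-2 : ℂ) • ∑ α, ((x α : ℝ) : ℂ) • ψ α := by
    intro ψ hψ
    have step : ∀ j : Fin m, ((ε j : ℝ) : ℂ) • c (Pi.single j 1) (c x (ψ j))
        = (-2 * ((x j : ℝ) : ℂ)) • ψ j
          - ((ε j : ℝ) : ℂ) • c x (c (Pi.single j 1) (ψ j)) := by
      intro j
      rw [hcex j (ψ j), smul_sub, smul_smul]
      congr 2
      push_cast
      linear_combination (-2 * ((x j : ℝ) : ℂ)) * heeC j
    rw [Finset.sum_congr rfl (fun j _ => step j), Finset.sum_sub_distrib]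
    have h2 : ∑ j, ((ε j : ℝ) : ℂ) • c x (c (Pi.single j 1) (ψ j))
        = c x (∑ j, ((ε j : ℝ) : ℂ) • c (Pi.single j 1) (ψ j)) := by
      rw [map_sum]
      exact Finset.sum_congr rfl fun j _ => (map_smul (c x) _ _).symm
    rw [h2, hψ, map_zero, sub_zero, Finset.smul_sum]
    exact Finset.sum_congr rfl fun j _ => by rw [smul_smul]

  have hmaps : Set.MapsTo
      (fun (ψ : Fin m → S) β => Complex.I • (c x (ψ β) -
        ((2 : ℂ) / (m : ℂ)) • c (Pi.single β 1) (∑ α, ((x α : ℝ) : ℂ) • ψ α)))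
      {ψ : Fin m → S | ∑ j, ((ε j : ℝ) : ℂ) • c (Pi.single j 1) (ψ j) = 0}
      {ψ : Fin m → S | ∑ j, ((ε j : ℝ) : ℂ) • c (Pi.single j 1) (ψ j) = 0} := by
    intro ψ hψ
    simp only [Set.mem_setOf_eq] at hψ ⊢
    have step : ∀ j : Fin m, ((ε j : ℝ) : ℂ) • c (Pi.single j 1)
          (Complex.I • (c x (ψ j) - ((2 : ℂ) / (m : ℂ)) • c (Pi.single j 1)
            (∑ α, ((x α : ℝ) : ℂ) • ψ α)))
        = Complex.I • (((ε j : ℝ) : ℂ) • c (Pi.single j 1) (c x (ψ j)))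
          - Complex.I • (((2 : ℂ) / (m : ℂ)) • (((ε j : ℝ) : ℂ) • c (Pi.single j 1)
            (c (Pi.single j 1) (∑ α, ((x α : ℝ) : ℂ) • ψ α)))) := by
      intro j
      simp only [map_smul, map_sub]
      module
    rw [Finset.sum_congr rfl (fun j _ => step j), Finset.sum_sub_distrib,
      ← Finset.smul_sum, ← Finset.smul_sum, hKsum ψ hψ]
    have h3 : ∀ j : Fin m, ((2 : ℂ) / (m : ℂ)) • (((ε j : ℝ) : ℂ) • c (Pi.single j 1)
          (c (Pi.single j 1) (∑ α, ((x α : ℝ) : ℂ) • ψ α)))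
        = ((2 : ℂ) / (m : ℂ)) • (-(∑ α, ((x α : ℝ) : ℂ) • ψ α)) := by
      intro j
      rw [hcee]
      match_scalars
      linear_combination (-(2 : ℂ) / (m : ℂ)) * heeC j
    rw [Finset.sum_congr rfl (fun j _ => h3 j), Finset.sum_const, Finset.card_univ,
      Fintype.card_fin, ← Nat.cast_smul_eq_nsmul ℂ]
    have hc : (m : ℂ) • (((2 : ℂ) / (m : ℂ)) • (-(∑ α, ((x α : ℝ) : ℂ) • ψ α)))
        = (2 : ℂ) • (-(∑ α, ((x α : ℝ) : ℂ) • ψ α)) := by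
      rw [smul_smul, show (m : ℂ) * ((2 : ℂ) / (m : ℂ)) = 2 from by field_simp]
    rw [hc]
    module
  refine ⟨hmaps, ?_⟩
  intro hx
  constructor
  · -- BijOn → not lightlike
    intro hbij hq0
    obtain ⟨φ, hφ, hcφ⟩ := hnil x hx (by rw [← hqdef]; exact hq0)
    have hβ : ∃ β, x β ≠ 0 := by
      by_contra h
      push_neg at h
      exact hx (funext fun β => h β)
    obtain ⟨β0, hβ0⟩ := hβ
    set ψ0 : Fin m → S := fun β => (((ε β : ℝ) : ℂ) * ((x β : ℝ) : ℂ)) • φ with hψ0def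
    have hψ0K : ψ0 ∈ {ψ : Fin m → S | ∑ j, ((ε j : ℝ) : ℂ) • c (Pi.single j 1) (ψ j) = 0} := by
      simp only [Set.mem_setOf_eq, hψ0def]
      have hs : ∀ j : Fin m, ((ε j : ℝ) : ℂ) • c (Pi.single j 1)
            ((((ε j : ℝ) : ℂ) * ((x j : ℝ) : ℂ)) • φ)
          = ((x j : ℝ) : ℂ) • c (Pi.single j 1) φ := by
        intro j
        rw [map_smul, smul_smul]
        congr 1
        linear_combination ((x j : ℝ) : ℂ) * heeC j
      rw [Finset.sum_congr rfl (fun j _ => hs j), ← aux_expand c x φ, hcφ]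
    have h0K : (0 : Fin m → S) ∈ {ψ : Fin m → S | ∑ j, ((ε j : ℝ) : ℂ) • c (Pi.single j 1) (ψ j) = 0} := by
      simp
    have hU0 : (∑ α, ((x α : ℝ) : ℂ) • ψ0 α) = 0 := by
      have hs : ∀ α : Fin m, ((x α : ℝ) : ℂ) • ψ0 α
          = (((ε α : ℝ) : ℂ) * ((x α : ℝ) : ℂ) * ((x α : ℝ) : ℂ)) • φ := by
        intro α
        rw [hψ0def, smul_smul]
        congr 1
        ring
      rw [Finset.sum_congr rfl (fun α _ => hs α), ← Finset.sum_smul]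
      have : (∑ α, ((ε α : ℝ) : ℂ) * ((x α : ℝ) : ℂ) * ((x α : ℝ) : ℂ)) = ((q : ℝ) : ℂ) := by
        rw [hqdef]
        push_cast
        rfl
      rw [this, hq0]
      simp
    have hσψ0 : (fun β => Complex.I • (c x (ψ0 β) -
          ((2 : ℂ) / (m : ℂ)) • c (Pi.single β 1) (∑ α, ((x α : ℝ) : ℂ) • ψ0 α)))
        = (fun β => Complex.I • (c x ((0 : Fin m → S) β) -
          ((2 : ℂ) / (m : ℂ)) • c (Pi.single β 1) (∑ α, ((x α : ℝ) : ℂ) • (0 : Fin m → S) β))) := by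
      funext β
      rw [hU0]
      simp only [hψ0def, map_smul, smul_smul, Pi.zero_apply, smul_zero, map_zero, sub_zero]
      rw [hcφ]
      simp
    have heq0 := hbij.injOn hψ0K h0K (by
      simpa using hσψ0)
    have : ψ0 β0 = 0 := by rw [heq0]; rfl
    rw [hψ0def] at this
    have hsc : ((ε β0 : ℝ) : ℂ) * ((x β0 : ℝ) : ℂ) ≠ 0 := by
      apply mul_ne_zero
      · simp only [ne_eq, Complex.ofReal_eq_zero]
        intro h
        have := hee β0
        rw [h] at this
        norm_num at this
      · exact Complex.ofReal_ne_zero.mpr hβ0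
    rcases smul_eq_zero.mp this with h | h
    · exact hsc h
    · exact hφ h
  · -- not lightlike → BijOn
    intro hq
    have hQ : ((q : ℝ) : ℂ) ≠ 0 := Complex.ofReal_ne_zero.mpr hq
    have hD' : ((q : ℝ) : ℂ) ^ 4 * (m : ℂ) * 4 - ((q : ℝ) : ℂ) ^ 4 * (m : ℂ) ^ 2 * 4
        + ((q : ℝ) : ℂ) ^ 4 * (m : ℂ) ^ 3 ≠ 0 := by
      have hdd : ((q : ℝ) : ℂ) ^ 4 * (m : ℂ) * 4 - ((q : ℝ) : ℂ) ^ 4 * (m : ℂ) ^ 2 * 4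
          + ((q : ℝ) : ℂ) ^ 4 * (m : ℂ) ^ 3
          = ((q : ℝ) : ℂ) ^ 4 * (m : ℂ) * ((m : ℂ) - 2) ^ 2 := by ring
      rw [hdd]
      exact mul_ne_zero (mul_ne_zero (pow_ne_zero 4 hQ) hm0) (pow_ne_zero 2 hm2)
    refine ⟨hmaps, ?_, ?_⟩
    · -- InjOn
      intro ψ₁ h₁ ψ₂ h₂ heq
      simp only [Set.mem_setOf_eq] at h₁ h₂
      have hkey : ∀ β, c x (ψ₁ β - ψ₂ β)
          = ((2 : ℂ) / (m : ℂ)) • c (Pi.single β 1)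
              (∑ α, ((x α : ℝ) : ℂ) • (ψ₁ α - ψ₂ α)) := by
        intro β
        have h := congrFun heq β
        simp only at h
        have h2 := congrArg (fun v => (-Complex.I) • v) h
        simp only [smul_smul, neg_mul, Complex.I_mul_I, neg_neg, one_smul] at h2
        have h3 : ∑ α, ((x α : ℝ) : ℂ) • (ψ₁ α - ψ₂ α)
            = (∑ α, ((x α : ℝ) : ℂ) • ψ₁ α) - ∑ α, ((x α : ℝ) : ℂ) • ψ₂ α := by
          rw [← Finset.sum_sub_distrib]
          exact Finset.sum_congr rfl fun α _ => smul_sub _ _ _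
        rw [map_sub, h3, map_sub, smul_sub]
        exact sub_eq_sub_iff_sub_eq_sub.mp h2
      have hcxU : c x (∑ α, ((x α : ℝ) : ℂ) • (ψ₁ α - ψ₂ α))
          = ((2 : ℂ) / (m : ℂ)) • c x (∑ α, ((x α : ℝ) : ℂ) • (ψ₁ α - ψ₂ α)) := by
        have h4 : c x (∑ α, ((x α : ℝ) : ℂ) • (ψ₁ α - ψ₂ α))
            = ∑ β, ((x β : ℝ) : ℂ) • c x (ψ₁ β - ψ₂ β) := by
          rw [map_sum]
          exact Finset.sum_congr rfl fun β _ => map_smul _ _ _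
        calc c x (∑ α, ((x α : ℝ) : ℂ) • (ψ₁ α - ψ₂ α))
            = ∑ β, ((x β : ℝ) : ℂ) • c x (ψ₁ β - ψ₂ β) := h4
          _ = ∑ β, ((x β : ℝ) : ℂ) • (((2 : ℂ) / (m : ℂ)) • c (Pi.single β 1)
                (∑ α, ((x α : ℝ) : ℂ) • (ψ₁ α - ψ₂ α))) :=
              Finset.sum_congr rfl fun β _ => by rw [hkey β]
          _ = ((2 : ℂ) / (m : ℂ)) • ∑ β, ((x β : ℝ) : ℂ) • c (Pi.single β 1)
                (∑ α, ((x α : ℝ) : ℂ) • (ψ₁ α - ψ₂ α)) := by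
              rw [Finset.smul_sum]
              exact Finset.sum_congr rfl fun β _ => smul_comm _ _ _
          _ = ((2 : ℂ) / (m : ℂ)) • c x (∑ α, ((x α : ℝ) : ℂ) • (ψ₁ α - ψ₂ α)) := by
              rw [← aux_expand c x (∑ α, ((x α : ℝ) : ℂ) • (ψ₁ α - ψ₂ α))]
      have h6 : (1 : ℂ) - 2 / (m : ℂ) ≠ 0 := by
        intro h
        field_simp at h
        exact hm2 (by rw [h, mul_zero])
      have h5 : ((1 : ℂ) - 2 / (m : ℂ)) • c x (∑ α, ((x α : ℝ) : ℂ) • (ψ₁ α - ψ₂ α)) = 0 := by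
        rw [sub_smul, one_smul, ← hcxU, sub_self]
      have h7 : c x (∑ α, ((x α : ℝ) : ℂ) • (ψ₁ α - ψ₂ α)) = 0 := by
        rcases smul_eq_zero.mp h5 with h | h
        · exact absurd h h6
        · exact h
      have h8 : (-((q : ℝ) : ℂ)) • (∑ α, ((x α : ℝ) : ℂ) • (ψ₁ α - ψ₂ α)) = 0 := by
        rw [← hcxx, h7, map_zero]
      have hU0 : (∑ α, ((x α : ℝ) : ℂ) • (ψ₁ α - ψ₂ α)) = 0 := by
        rcases smul_eq_zero.mp h8 with h | h
        · exact absurd h (neg_ne_zero.mpr hQ)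
        · exact h
      funext β
      have h9 : c x (ψ₁ β - ψ₂ β) = 0 := by
        rw [hkey β, hU0, map_zero, smul_zero]
      have h10 : (-((q : ℝ) : ℂ)) • (ψ₁ β - ψ₂ β) = 0 := by
        rw [← hcxx, h9, map_zero]
      rcases smul_eq_zero.mp h10 with h | h
      · exact absurd h (neg_ne_zero.mpr hQ)
      · exact sub_eq_zero.mp h
    · -- SurjOn
      intro χ hχ
      simp only [Set.mem_setOf_eq] at hχ
      refine ⟨fun β => (-Complex.I) • ((-((q : ℝ) : ℂ)⁻¹) • c x (χ β) + (2 / (((q : ℝ) : ℂ) * ((m : ℂ) - 2))) • c (Pi.single β 1) (∑ α, ((x α : ℝ) : ℂ) • χ α) + ((-4 / (((q : ℝ) : ℂ) ^ 2 * ((m : ℂ) - 2))) * ((ε β : ℝ) : ℂ) * ((x β : ℝ) : ℂ)) • c x (∑ α, ((x α : ℝ) : ℂ) • χ α)), ?_, ?_⟩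
      · -- ψ ∈ K
        simp only [Set.mem_setOf_eq]
        have step1 : ∀ β : Fin m, ((ε β : ℝ) : ℂ) • c (Pi.single β 1)
              ((-Complex.I) • ((-((q : ℝ) : ℂ)⁻¹) • c x (χ β) + (2 / (((q : ℝ) : ℂ) * ((m : ℂ) - 2))) • c (Pi.single β 1) (∑ α, ((x α : ℝ) : ℂ) • χ α) + ((-4 / (((q : ℝ) : ℂ) ^ 2 * ((m : ℂ) - 2))) * ((ε β : ℝ) : ℂ) * ((x β : ℝ) : ℂ)) • c x (∑ α, ((x α : ℝ) : ℂ) • χ α)))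
            = (-Complex.I * (-((q : ℝ) : ℂ)⁻¹)) • (((ε β : ℝ) : ℂ) • c (Pi.single β 1) (c x (χ β)))
              + (Complex.I * (2 / (((q : ℝ) : ℂ) * ((m : ℂ) - 2)))) • (∑ α, ((x α : ℝ) : ℂ) • χ α)
              + (-Complex.I * (-4 / (((q : ℝ) : ℂ) ^ 2 * ((m : ℂ) - 2)))) • (((x β : ℝ) : ℂ) • c (Pi.single β 1) (c x (∑ α, ((x α : ℝ) : ℂ) • χ α))) := by
          intro β
          simp only [map_smul, map_add, hcee]
          match_scalars
          · ring
          · linear_combination (Complex.I * (2 / (((q : ℝ) : ℂ) * ((m : ℂ) - 2)))) * heeC β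
          · linear_combination (-Complex.I * (-4 / (((q : ℝ) : ℂ) ^ 2 * ((m : ℂ) - 2))) * ((x β : ℝ) : ℂ)) * heeC β
        rw [Finset.sum_congr rfl (fun β _ => step1 β), Finset.sum_add_distrib,
          Finset.sum_add_distrib, ← Finset.smul_sum, ← Finset.smul_sum,
          hKsum χ hχ, Finset.sum_const, Finset.card_univ, Fintype.card_fin,
          ← Nat.cast_smul_eq_nsmul ℂ, ← Finset.smul_sum,
          ← aux_expand c x (c x (∑ α, ((x α : ℝ) : ℂ) • χ α)), hcxx (∑ α, ((x α : ℝ) : ℂ) • χ α)]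
        have hD : ((q : ℝ) : ℂ) ^ 4 * ((m : ℂ) * 4 - (m : ℂ) ^ 2 * 4 + (m : ℂ) ^ 3) ≠ 0 := by
          have hdd : ((m : ℂ) * 4 - (m : ℂ) ^ 2 * 4 + (m : ℂ) ^ 3)
              = (m : ℂ) * ((m : ℂ) - 2) ^ 2 := by ring
          rw [hdd]
          exact mul_ne_zero (pow_ne_zero 4 hQ) (mul_ne_zero hm0 (pow_ne_zero 2 hm2))
        match_scalars
        all_goals field_simp [hQ, hm0, hm2]
        all_goals try field_simp [hD']
        all_goals try ring
        all_goals try linear_combination 2 * inv_mul_cancel₀ hD'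
      · -- σQ ψ = χ
        have hUψ : (∑ α, ((x α : ℝ) : ℂ) • ((-Complex.I) • ((-((q : ℝ) : ℂ)⁻¹) • c x (χ α) + (2 / (((q : ℝ) : ℂ) * ((m : ℂ) - 2))) • c (Pi.single α 1) (∑ α', ((x α' : ℝ) : ℂ) • χ α') + ((-4 / (((q : ℝ) : ℂ) ^ 2 * ((m : ℂ) - 2))) * ((ε α : ℝ) : ℂ) * ((x α : ℝ) : ℂ)) • c x (∑ α', ((x α' : ℝ) : ℂ) • χ α'))))
            = (-Complex.I) • ((((-((q : ℝ) : ℂ)⁻¹) + (2 / (((q : ℝ) : ℂ) * ((m : ℂ) - 2))) + (-4 / (((q : ℝ) : ℂ) ^ 2 * ((m : ℂ) - 2))) * ((q : ℝ) : ℂ)) • c x (∑ α', ((x α' : ℝ) : ℂ) • χ α'))) := by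
          have step2 : ∀ α : Fin m, ((x α : ℝ) : ℂ) • ((-Complex.I) • ((-((q : ℝ) : ℂ)⁻¹) • c x (χ α) + (2 / (((q : ℝ) : ℂ) * ((m : ℂ) - 2))) • c (Pi.single α 1) (∑ α', ((x α' : ℝ) : ℂ) • χ α') + ((-4 / (((q : ℝ) : ℂ) ^ 2 * ((m : ℂ) - 2))) * ((ε α : ℝ) : ℂ) * ((x α : ℝ) : ℂ)) • c x (∑ α', ((x α' : ℝ) : ℂ) • χ α')))
              = (-Complex.I * (-((q : ℝ) : ℂ)⁻¹)) • (((x α : ℝ) : ℂ) • c x (χ α))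
                + (-Complex.I * (2 / (((q : ℝ) : ℂ) * ((m : ℂ) - 2)))) • (((x α : ℝ) : ℂ) • c (Pi.single α 1) (∑ α', ((x α' : ℝ) : ℂ) • χ α'))
                + (-Complex.I * (-4 / (((q : ℝ) : ℂ) ^ 2 * ((m : ℂ) - 2)))) • ((((x α : ℝ) : ℂ) * ((ε α : ℝ) : ℂ) * ((x α : ℝ) : ℂ))
                    • c x (∑ α', ((x α' : ℝ) : ℂ) • χ α')) := by
            intro α
            match_scalars <;> (try ring)
          rw [Finset.sum_congr rfl (fun α _ => step2 α), Finset.sum_add_distrib,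
            Finset.sum_add_distrib, ← Finset.smul_sum, ← Finset.smul_sum, ← Finset.smul_sum]
          have e1 : (∑ α, ((x α : ℝ) : ℂ) • c x (χ α)) = c x (∑ α', ((x α' : ℝ) : ℂ) • χ α') := by
            rw [map_sum]
            exact Finset.sum_congr rfl fun α _ => (map_smul (c x) _ _).symm
          have e2 : (∑ α, ((x α : ℝ) : ℂ) • c (Pi.single α 1) (∑ α', ((x α' : ℝ) : ℂ) • χ α')) = c x (∑ α', ((x α' : ℝ) : ℂ) • χ α') :=
            (aux_expand c x _).symm
          have e3 : (∑ α, (((x α : ℝ) : ℂ) * ((ε α : ℝ) : ℂ) * ((x α : ℝ) : ℂ)) • c x (∑ α', ((x α' : ℝ) : ℂ) • χ α'))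
              = ((q : ℝ) : ℂ) • c x (∑ α', ((x α' : ℝ) : ℂ) • χ α') := by
            rw [← Finset.sum_smul, hqdef]
            congr 1
            push_cast
            exact Finset.sum_congr rfl fun α _ => by ring
          rw [e1, e2, e3]
          match_scalars <;> (try ring)
        funext β
        show Complex.I • (c x ((-Complex.I) • ((-((q : ℝ) : ℂ)⁻¹) • c x (χ β) + (2 / (((q : ℝ) : ℂ) * ((m : ℂ) - 2))) • c (Pi.single β 1) (∑ α, ((x α : ℝ) : ℂ) • χ α) + ((-4 / (((q : ℝ) : ℂ) ^ 2 * ((m : ℂ) - 2))) * ((ε β : ℝ) : ℂ) * ((x β : ℝ) : ℂ)) • c x (∑ α, ((x α : ℝ) : ℂ) • χ α)))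
          - ((2 : ℂ) / (m : ℂ)) • c (Pi.single β 1)
              (∑ α, ((x α : ℝ) : ℂ) • ((-Complex.I) • ((-((q : ℝ) : ℂ)⁻¹) • c x (χ α) + (2 / (((q : ℝ) : ℂ) * ((m : ℂ) - 2))) • c (Pi.single α 1) (∑ α', ((x α' : ℝ) : ℂ) • χ α') + ((-4 / (((q : ℝ) : ℂ) ^ 2 * ((m : ℂ) - 2))) * ((ε α : ℝ) : ℂ) * ((x α : ℝ) : ℂ)) • c x (∑ α', ((x α' : ℝ) : ℂ) • χ α'))))) = χ β
        have hIcanc : ∀ v : S, Complex.I • ((-Complex.I) • v) = v := by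
          intro v
          rw [smul_smul, mul_neg, Complex.I_mul_I, neg_neg, one_smul]
        rw [hUψ, map_smul (c (Pi.single β 1)), map_smul (c x), smul_sub,
          smul_comm Complex.I ((2 : ℂ) / (m : ℂ)), hIcanc, hIcanc]
        simp only [map_add, map_smul, hcxx, hcxe]
        match_scalars
        all_goals field_simp [hQ, hm0, hm2]
        all_goals try field_simp [hD']
        all_goals try ring
        all_goals try linear_combination 2 * inv_mul_cancel₀ hD'
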